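/- For n ∈ ℕ₀ and α, β ∈ ℝ, the Jacobi polynomial P_n^{α,β} satisfies the differential equation −(1−x)^{−α}(1+x)^{−β} d/dx[(1−x)^{α+1}(1+x)^{β+1} d/dx P_n^{α,β}(x)] = n(n+1+α+β) P_n^{α,β}(x) for x ∈ (−1,1). -/

import Mathlib

open Set

/-- Coefficient of the Jacobi polynomial. -/
noncomputable def jc (n : ℕ) (α β : ℝ) (k : ℕ) : ℝ :=
  ((ascPochhammer ℝ (n - k)).eval (α + k + 1)
      * (ascPochhammer ℝ k).eval ((n : ℝ) + α + β + 1))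
    / ((n - k).factorial * k.factorial)

/-- The Jacobi polynomial
`P_n^{α,β}(x) = ((α+1)_n/n!) F(−n, n+α+β+1; α+1; (1−x)/2)`, written out as the finite sum
`∑_{k=0}^n (α+k+1)_{n−k} (n+α+β+1)_k / ((n−k)! k!) ((x−1)/2)^k` (which extends the
hypergeometric formula by continuity to all real parameters). -/
noncomputable def jacobiP (n : ℕ) (α β : ℝ) (x : ℝ) : ℝ :=
  ∑ k ∈ Finset.range (n + 1),
    ((ascPochhammer ℝ (n - k)).eval (α + k + 1)
        * (ascPochhammer ℝ k).eval ((n : ℝ) + α + β + 1))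
      / ((n - k).factorial * k.factorial) * ((x - 1) / 2) ^ k

/-- First derivative of the Jacobi polynomial. -/
noncomputable def jD (n : ℕ) (α β : ℝ) (x : ℝ) : ℝ :=
  ∑ i ∈ Finset.range n, jc n α β (i+1) * (((i:ℝ)+1) * ((x - 1) / 2) ^ i * (1/2))

/-- Second derivative of the Jacobi polynomial. -/
noncomputable def jE (n : ℕ) (α β : ℝ) (x : ℝ) : ℝ :=
  ∑ i ∈ Finset.range n,
    jc n α β (i+1) * (((i:ℝ)+1) * ((i:ℝ) * ((x - 1) / 2) ^ (i-1) * (1/2)) * (1/2))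

lemma hasDerivAt_jacobiP (n : ℕ) (α β : ℝ) (x : ℝ) :
    HasDerivAt (jacobiP n α β) (jD n α β x) x := by
  have ht : HasDerivAt (fun y : ℝ => (y - 1) / 2) (1/2) x := by
    simpa using ((hasDerivAt_id x).sub_const 1).div_const 2
  have h : HasDerivAt (jacobiP n α β)
      (∑ k ∈ Finset.range (n+1), jc n α β k * ((k:ℝ) * ((x-1)/2) ^ (k-1) * (1/2))) x := by
    apply HasDerivAt.fun_sum
    intro k _
    exact (ht.pow k).const_mul (jc n α β k)
  convert h using 1
  rw [jD, Finset.sum_range_succ']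
  push_cast
  simp

lemma hasDerivAt_jD (n : ℕ) (α β : ℝ) (x : ℝ) :
    HasDerivAt (jD n α β) (jE n α β x) x := by
  have ht : HasDerivAt (fun y : ℝ => (y - 1) / 2) (1/2) x := by
    simpa using ((hasDerivAt_id x).sub_const 1).div_const 2
  apply HasDerivAt.fun_sum
  intro i _
  have := ((ht.pow i).const_mul (((i:ℝ)+1))).div_const 2
  have h2 := this.const_mul (jc n α β (i+1))
  convert h2 using 1
  · rfl
  · ext y; simp only [Pi.pow_apply]; ring
  · ring

lemma crec (n : ℕ) (α β : ℝ) {k : ℕ} (hk : k < n) :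
    jc n α β (k+1) * ((k:ℝ)+1) * ((k:ℝ)+α+1)
      = jc n α β k * ((n:ℝ)-(k:ℝ)) * ((n:ℝ)+(k:ℝ)+α+β+1) := by
  obtain ⟨m, hm⟩ : ∃ m, n - k = m + 1 := ⟨n - k - 1, by omega⟩
  have hm2 : n - (k+1) = m := by omega
  have hnk : ((n:ℝ) - (k:ℝ)) = (m:ℝ) + 1 := by
    have : n = k + (m + 1) := by omega
    subst this; push_cast; ring
  rw [jc, jc, hm, hm2, hnk]
  rw [ascPochhammer_succ_right (S := ℝ) (n := k), ascPochhammer_succ_left (S := ℝ) (n := m)]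
  simp only [Polynomial.eval_mul, Polynomial.eval_comp, Polynomial.eval_add,
    Polynomial.eval_X, Polynomial.eval_one, Polynomial.eval_natCast, Nat.factorial_succ]
  push_cast
  have h1 : ((m:ℝ) + 1) ≠ 0 := by positivity
  have h2 : ((k:ℝ) + 1) ≠ 0 := by positivity
  have h3 : ((m.factorial : ℝ)) ≠ 0 := Nat.cast_ne_zero.mpr m.factorial_ne_zero
  have h4 : ((k.factorial : ℝ)) ≠ 0 := Nat.cast_ne_zero.mpr k.factorial_ne_zero
  field_simp
  ring

lemma jkey (n : ℕ) (α β : ℝ) (x : ℝ) :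
    (1-x)*(1+x) * jE n α β x + (β - α - (α+β+2)*x) * jD n α β x
      + (n:ℝ)*((n:ℝ)+α+β+1) * jacobiP n α β x = 0 := by
  have hpow : ∀ i : ℕ, (i:ℝ) * ((x-1)/2 * ((x-1)/2)^(i-1)) = (i:ℝ) * ((x-1)/2)^i := by
    intro i
    cases i with
    | zero => simp
    | succ m => rw [Nat.add_sub_cancel, ← pow_succ']
  have hP : jacobiP n α β x = ∑ k ∈ Finset.range (n+1), jc n α β k * ((x-1)/2)^k := rfl
  have stepA : (1-x)*(1+x) * jE n α β x + (β - α - (α+β+2)*x) * jD n α β x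
      = (∑ i ∈ Finset.range n, (-(jc n α β (i+1) * ((i:ℝ)+1) * ((i:ℝ)+α+1))) * ((x-1)/2)^i)
        + ∑ i ∈ Finset.range n,
            (-(jc n α β (i+1) * (((i:ℝ)+1)) * (((i:ℝ)+1)+α+β+1))) * ((x-1)/2)^(i+1) := by
    rw [jE, jD, Finset.mul_sum, Finset.mul_sum, ← Finset.sum_add_distrib,
      ← Finset.sum_add_distrib]
    refine Finset.sum_congr rfl fun i _ => ?_
    linear_combination (jc n α β (i+1) * (((i:ℝ)+1)) * (-(1+x)/2)) * hpow i
  have stepB : ∑ i ∈ Finset.range n,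
        (-(jc n α β (i+1) * (((i:ℝ)+1)) * (((i:ℝ)+1)+α+β+1))) * ((x-1)/2)^(i+1)
      = ∑ k ∈ Finset.range (n+1), (-(jc n α β k * (k:ℝ) * ((k:ℝ)+α+β+1))) * ((x-1)/2)^k := by
    rw [Finset.sum_range_succ']
    push_cast
    simp
  have stepC : (∑ k ∈ Finset.range (n+1), (-(jc n α β k * (k:ℝ) * ((k:ℝ)+α+β+1))) * ((x-1)/2)^k)
      + (n:ℝ)*((n:ℝ)+α+β+1) * jacobiP n α β x
      = ∑ k ∈ Finset.range n,
          (jc n α β k * (((n:ℝ)-(k:ℝ)) * ((n:ℝ)+(k:ℝ)+α+β+1))) * ((x-1)/2)^k := by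
    rw [hP, Finset.mul_sum, ← Finset.sum_add_distrib, Finset.sum_range_succ]
    have hlast : (-(jc n α β n * (n:ℝ) * ((n:ℝ)+α+β+1))) * ((x-1)/2)^n
        + (n:ℝ)*((n:ℝ)+α+β+1) * (jc n α β n * ((x-1)/2)^n) = 0 := by ring
    rw [hlast, add_zero]
    refine Finset.sum_congr rfl fun k _ => by ring
  rw [stepA, stepB, add_assoc, stepC, ← Finset.sum_add_distrib]
  refine Finset.sum_eq_zero fun i hi => ?_
  have h := crec n α β (Finset.mem_range.mp hi)
  linear_combination (-((x-1)/2)^i) * h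

/-- For all `n ∈ ℕ₀` and `α, β ∈ ℝ`, the Jacobi polynomial `P_n^{α,β}` satisfies
`−[(1−x)^{α+1}(1+x)^{β+1}(P_n^{α,β})']' = n(n+1+α+β)(1−x)^α(1+x)^β P_n^{α,β}`
on `(−1,1)`. -/
theorem jacobiP_differential_equation (n : ℕ) (α β : ℝ) :
    ∀ x ∈ Ioo (-1 : ℝ) 1,
      HasDerivAt
        (fun y : ℝ => (1 - y) ^ (α + 1) * (1 + y) ^ (β + 1) * deriv (jacobiP n α β) y)
        (-((n : ℝ) * ((n : ℝ) + 1 + α + β)) * ((1 - x) ^ α * (1 + x) ^ β)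
          * jacobiP n α β x) x := by
  rintro x ⟨hx1, hx2⟩
  have h1 : 0 < 1 - x := by linarith
  have h2 : 0 < 1 + x := by linarith
  have hDeq : (fun y : ℝ => (1 - y) ^ (α + 1) * (1 + y) ^ (β + 1) * deriv (jacobiP n α β) y)
      = fun y : ℝ => (1 - y) ^ (α + 1) * (1 + y) ^ (β + 1) * jD n α β y := by
    funext y; rw [(hasDerivAt_jacobiP n α β y).deriv]
  rw [hDeq]
  have hG1 : HasDerivAt (fun y : ℝ => (1 - y) ^ (α + 1))
      ((-1) * (α+1) * (1-x) ^ (α+1-1)) x := by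
    exact ((hasDerivAt_id x).const_sub 1).rpow_const (Or.inl h1.ne')
  have hG2 : HasDerivAt (fun y : ℝ => (1 + y) ^ (β + 1))
      (1 * (β+1) * (1+x) ^ (β+1-1)) x := by
    exact ((hasDerivAt_id x).const_add 1).rpow_const (Or.inl h2.ne')
  have hF := (hG1.mul hG2).mul (hasDerivAt_jD n α β x)
  convert hF using 1
  · rfl
  · rfl
  · rfl
  simp only [Pi.mul_apply]
  rw [show α+1-1 = α by ring, show β+1-1 = β by ring,
    Real.rpow_add_one h1.ne' α, Real.rpow_add_one h2.ne' β]
  linear_combination (-((1-x)^α * (1+x)^β)) * jkey n α β x
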